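/- arXiv:2410.20784 — 3 statements merged into one kernel-verified Lean document; each statement's English description precedes it below -/
import Mathlib

section
/- Let S be a bounded linear operator on a Hilbert space X and suppose ⟪Sv, v⟫ ≥ −c₀‖v‖² for all v ∈ X, where c₀ ≥ 0. If τ > 0 and τc₀/2 < 1, then P₊ = I + (τ/2)S is invertible, ‖P₊⁻¹‖ ≤ (1 − τc₀/2)⁻¹, and the operator P = P₊⁻¹(I − (τ/2)S) satisfies ‖Pv‖ ≤ (1 + τc₀/2)/(1 − τc₀/2)·‖v‖ ≤ e^{2τc₀/(2−τc₀)}‖v‖ for all v ∈ X. -/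
open scoped RealInnerProductSpace

/-- P₊ = I + (τ/2)S is invertible with ‖P₊⁻¹‖ ≤ (1 − τc₀/2)⁻¹ and
P = P₊⁻¹(I − (τ/2)S) satisfies ‖Pv‖ ≤ (1+τc₀/2)/(1−τc₀/2)‖v‖ ≤ e^{2τc₀/(2−τc₀)}‖v‖. -/
theorem stmt_2 {X : Type*} [NormedAddCommGroup X] [InnerProductSpace ℝ X] [CompleteSpace X]
    (S : X →L[ℝ] X) (c₀ : ℝ) (hc₀ : 0 ≤ c₀)
    (hmono : ∀ v : X, ⟪S v, v⟫ ≥ -c₀ * ‖v‖ ^ 2)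
    (τ : ℝ) (hτ : 0 < τ) (hτc : τ * c₀ < 2) :
    ∃ Pinv : X →L[ℝ] X,
      Pinv.comp (ContinuousLinearMap.id ℝ X + (τ / 2) • S) = ContinuousLinearMap.id ℝ X ∧
      (ContinuousLinearMap.id ℝ X + (τ / 2) • S).comp Pinv = ContinuousLinearMap.id ℝ X ∧
      ‖Pinv‖ ≤ (1 - τ * c₀ / 2)⁻¹ ∧
      (∀ v : X,
        ‖Pinv ((ContinuousLinearMap.id ℝ X - (τ / 2) • S) v)‖ ≤
          (1 + τ * c₀ / 2) / (1 - τ * c₀ / 2) * ‖v‖ ∧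
        (1 + τ * c₀ / 2) / (1 - τ * c₀ / 2) * ‖v‖ ≤
          Real.exp (2 * τ * c₀ / (2 - τ * c₀)) * ‖v‖) := by
  set a : ℝ := τ * c₀ / 2 with ha
  have ha0 : 0 ≤ a := by positivity
  have hμ : 0 < 1 - a := by simp only [ha]; linarith
  set Pp : X →L[ℝ] X := ContinuousLinearMap.id ℝ X + (τ / 2) • S with hPp
  set Pm : X →L[ℝ] X := ContinuousLinearMap.id ℝ X - (τ / 2) • S with hPm
  have hPpv : ∀ v : X, Pp v = v + (τ / 2) • S v := fun v => rfl
  have hPmv : ∀ v : X, Pm v = v - (τ / 2) • S v := fun v => rfl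
  -- coercivity
  have hco : ∀ v : X, (1 - a) * ‖v‖ * ‖v‖ ≤ ⟪Pp v, v⟫ := by
    intro v
    rw [hPpv, inner_add_left, real_inner_smul_left, real_inner_self_eq_norm_sq]
    have := hmono v
    nlinarith [norm_nonneg v]
  -- lower bound for Pp
  have hlow : ∀ u : X, (1 - a) * ‖u‖ ≤ ‖Pp u‖ := by
    intro u
    rcases eq_or_ne u 0 with rfl | hu
    · simp
    · have h1 : (1 - a) * ‖u‖ * ‖u‖ ≤ ‖Pp u‖ * ‖u‖ :=
        (hco u).trans (real_inner_le_norm _ _)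
      exact le_of_mul_le_mul_right h1 (norm_pos_iff.mpr hu)
  -- Lax-Milgram
  have hcoercive : IsCoercive ((innerSL ℝ (E := X)).comp Pp) := by
    refine ⟨1 - a, hμ, fun u => ?_⟩
    simpa using hco u
  set e := hcoercive.continuousLinearEquivOfBilin with he
  have heq : ∀ v : X, e v = Pp v := by
    intro v
    apply ext_inner_right ℝ
    intro w
    rw [hcoercive.continuousLinearEquivOfBilin_apply]
    simp
  refine ⟨(e.symm : X →L[ℝ] X), ?_, ?_, ?_, ?_⟩
  · ext v
    simp [← heq v]
  · ext v
    have : Pp (e.symm v) = e (e.symm v) := (heq _).symm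
    simp [this]
  · apply ContinuousLinearMap.opNorm_le_bound _ (by positivity)
    intro v
    have h1 : (1 - a) * ‖e.symm v‖ ≤ ‖Pp (e.symm v)‖ := hlow _
    have h2 : Pp (e.symm v) = v := by rw [← heq]; exact e.apply_symm_apply v
    rw [h2] at h1
    calc ‖e.symm v‖ = (1 - a)⁻¹ * ((1 - a) * ‖e.symm v‖) := by field_simp
    _ ≤ (1 - a)⁻¹ * ‖v‖ := by
        apply mul_le_mul_of_nonneg_left h1 (by positivity)
  · intro v
    constructor
    · -- main bound
      set u : X := e.symm v with hu
      have hPpu : Pp u = v := by rw [← heq]; exact e.apply_symm_apply v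
      have hcomm : Pm (Pp u) = Pp (Pm u) := by
        simp only [hPmv, hPpv, map_add, map_sub, map_smul]
        module
      have hrw : (e.symm : X →L[ℝ] X) (Pm v) = Pm u := by
        have : Pm v = e (Pm u) := by rw [heq, ← hcomm, hPpu]
        rw [this]; exact e.symm_apply_apply _
      rw [hrw]
      -- key inequality : ‖Pm u‖^2 ≤ ‖Pp u‖^2 + 2τc₀‖u‖^2
      have hkey : ‖Pm u‖ ^ 2 ≤ ‖Pp u‖ ^ 2 + 2 * τ * c₀ * ‖u‖ ^ 2 := by
        rw [hPmv, hPpv]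
        rw [norm_sub_sq_real, norm_add_sq_real]
        have h1 : ⟪u, (τ / 2) • S u⟫ = (τ / 2) * ⟪S u, u⟫ := by
          rw [real_inner_smul_right, real_inner_comm]
        have h2 := hmono u
        nlinarith [norm_nonneg u]
      have hub : ‖u‖ ≤ (1 - a)⁻¹ * ‖v‖ := by
        have h1 : (1 - a) * ‖u‖ ≤ ‖v‖ := by rw [← hPpu]; exact hlow u
        calc ‖u‖ = (1 - a)⁻¹ * ((1 - a) * ‖u‖) := by field_simp
        _ ≤ (1 - a)⁻¹ * ‖v‖ := mul_le_mul_of_nonneg_left h1 (by positivity)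
      have hPpu' : ‖Pp u‖ = ‖v‖ := by rw [hPpu]
      -- combine: ‖Pm u‖^2 ≤ ((1+a)/(1-a) * ‖v‖)^2
      have hsq : ‖Pm u‖ ^ 2 ≤ ((1 + a) / (1 - a) * ‖v‖) ^ 2 := by
        have hu2 : ‖u‖ ^ 2 ≤ ((1 - a)⁻¹ * ‖v‖) ^ 2 :=
          pow_le_pow_left₀ (norm_nonneg u) hub 2
        have hident : ‖v‖ ^ 2 + 2 * τ * c₀ * ((1 - a)⁻¹ * ‖v‖) ^ 2
            = ((1 + a) / (1 - a) * ‖v‖) ^ 2 := by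
          have h4a : 2 * τ * c₀ = 4 * a := by rw [ha]; ring
          rw [h4a]
          field_simp
          ring
        rw [hPpu'] at hkey
        rw [← hident]
        nlinarith [hc₀, hτ.le]
      have hrhs : 0 ≤ (1 + a) / (1 - a) * ‖v‖ := by positivity
      nlinarith [hsq, hrhs, norm_nonneg (Pm u)]
    · -- exp bound
      have hexp : 2 * τ * c₀ / (2 - τ * c₀) = 2 * a / (1 - a) := by
        rw [ha]
        rw [div_eq_div_iff (by linarith) (by linarith)]
        ring
      rw [hexp]
      apply mul_le_mul_of_nonneg_right _ (norm_nonneg v)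
      have h1 : 2 * a / (1 - a) + 1 ≤ Real.exp (2 * a / (1 - a)) :=
        Real.add_one_le_exp _
      have h2 : (1 + a) / (1 - a) = 2 * a / (1 - a) + 1 := by
        field_simp
        ring
      linarith
end

section
/- With the notation of the block inverse formula, the stability matrix P = P₊⁻¹P₋ with P₋ = [[I, τ/2·I], [−τ/2·A, I − τ/2·B]] satisfies P = [[−I + Q₊⁻¹(2I + τB), τQ₊⁻¹], [−(4/τ)I + (2/τ)Q₊⁻¹(2I + τB), −I + 2Q₊⁻¹]] as operators on H × H. -/
/-- explicit block form of the stability operator P = P₊⁻¹P₋. -/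
theorem stmt_12 {H : Type*} [AddCommGroup H] [Module ℝ H]
    (A B : H →ₗ[ℝ] H) (τ : ℝ) (hτ : 0 < τ)
    (Qinv : H →ₗ[ℝ] H)
    (hQ₁ : ∀ w : H, Qinv (w + (τ ^ 2 / 4) • A w + (τ / 2) • B w) = w)
    (hQ₂ : ∀ w : H, Qinv w + (τ ^ 2 / 4) • A (Qinv w) + (τ / 2) • B (Qinv w) = w)
    (Pinv : H × H → H × H)
    (hPinv₁ : ∀ u v : H,
      Pinv (u - (τ / 2) • v, (τ / 2) • A u + v + (τ / 2) • B v) = (u, v))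
    (hPinv₂ : ∀ u v : H,
      ((Pinv (u, v)).1 - (τ / 2) • (Pinv (u, v)).2,
        (τ / 2) • A (Pinv (u, v)).1 + (Pinv (u, v)).2 + (τ / 2) • B (Pinv (u, v)).2) = (u, v)) :
    ∀ u v : H,
      Pinv (u + (τ / 2) • v, -((τ / 2) • A u) + v - (τ / 2) • B v) =
        (-u + Qinv ((2:ℝ) • u + τ • B u) + τ • Qinv v,
         (-(4 / τ)) • u + (2 / τ) • Qinv ((2:ℝ) • u + τ • B u) + (-v + (2:ℝ) • Qinv v)) := by
  intro u v
  have hτ' : τ ≠ 0 := ne_of_gt hτ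
  set a := Qinv ((2:ℝ) • u + τ • B u) with ha
  set b := Qinv v with hb
  set u' : H := -u + a + τ • b with hu'
  set v' : H := (-(4 / τ)) • u + (2 / τ) • a + (-v + (2:ℝ) • b) with hv'
  have h1 := hQ₂ ((2:ℝ) • u + τ • B u)
  have h2 := hQ₂ v
  rw [← ha] at h1
  rw [← hb] at h2
  have key := hPinv₁ u' v'
  have e1 : u' - (τ / 2) • v' = u + (τ / 2) • v := by
    rw [hu', hv']
    match_scalars <;> (field_simp; try ring)
  have e2 : (τ / 2) • A u' + v' + (τ / 2) • B v' =
      -((τ / 2) • A u) + v - (τ / 2) • B v := by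
    rw [hu', hv']
    simp only [map_add, map_smul, map_neg, map_sub]
    linear_combination (norm := match_scalars <;> field_simp <;> ring)
      (2 / τ : ℝ) • h1 + (2:ℝ) • h2
  rw [e1, e2] at key
  exact key
end

section
/- Interpolation–adjoint comparison: with V, Vₕ, Lₕ, Lₕ* as above and Iₕ : Z → Vₕ linear defined on a subspace Z ⊆ V, for any u ∈ Z one has ‖(Lₕ* − Iₕ)u‖_{Vₕ} ≤ C_V‖(I − Lₕ∘Iₕ)u‖_V + sup_{‖ωₕ‖_{Vₕ}=1} |p(Lₕ(Iₕ u), Lₕωₕ) − pₕ(Iₕ u, ωₕ)|. -/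
open scoped RealInnerProductSpace

/-- interpolation–adjoint comparison. -/
theorem stmt_17 {V Vh : Type*}
    [NormedAddCommGroup V] [InnerProductSpace ℝ V]
    [NormedAddCommGroup Vh] [InnerProductSpace ℝ Vh] [FiniteDimensional ℝ Vh]
    (L : Vh →ₗ[ℝ] V) (CV : ℝ) (hCV : 0 < CV)
    (hL : ∀ φ : Vh, ‖L φ‖ ≤ CV * ‖φ‖)
    (Lstar : V →ₗ[ℝ] Vh)
    (hLstar : ∀ (v : V) (ω : Vh), ⟪Lstar v, ω⟫ = ⟪v, L ω⟫)
    (Z : Submodule ℝ V) (Ih : Z →ₗ[ℝ] Vh) (u : Z) :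
    ‖Lstar (u : V) - Ih u‖ ≤
      CV * ‖(u : V) - L (Ih u)‖ +
      ⨆ ω : Metric.sphere (0 : Vh) 1, |⟪L (Ih u), L (ω : Vh)⟫ - ⟪Ih u, (ω : Vh)⟫| := by
  set a : Vh := Ih u with ha
  set e : Vh := Lstar (u : V) - a with he
  set f : Vh → ℝ := fun ω => |⟪L a, L ω⟫ - ⟪a, ω⟫| with hf
  have hfc : Continuous f := by
    have hLc : Continuous L := L.continuous_of_finiteDimensional
    exact ((Continuous.inner continuous_const hLc).sub
      (Continuous.inner continuous_const continuous_id)).abs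
  have hbdd : BddAbove (Set.range fun ω : Metric.sphere (0 : Vh) 1 => f ω) := by
    have hc : IsCompact (Metric.sphere (0 : Vh) 1) := isCompact_sphere 0 1
    have himg : Set.range (fun ω : Metric.sphere (0 : Vh) 1 => f ω)
        = f '' Metric.sphere (0 : Vh) 1 := by
      ext x
      constructor
      · rintro ⟨ω, rfl⟩; exact ⟨ω, ω.2, rfl⟩
      · rintro ⟨y, hy, rfl⟩; exact ⟨⟨y, hy⟩, rfl⟩
    rw [himg]
    exact (hc.image hfc).bddAbove
  by_cases h0 : e = 0
  · have : ‖Lstar (u : V) - Ih u‖ = 0 := by rw [← ha, ← he, h0, norm_zero]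
    rw [this]
    exact add_nonneg (mul_nonneg hCV.le (norm_nonneg _))
      (Real.iSup_nonneg fun ω => abs_nonneg _)
  · have hne : ‖e‖ ≠ 0 := norm_ne_zero_iff.mpr h0
    set ω₀ : Metric.sphere (0 : Vh) 1 := ⟨‖e‖⁻¹ • e, by
      simp [mem_sphere_zero_iff_norm, norm_smul, abs_of_nonneg, inv_mul_cancel₀ hne]⟩
      with hω₀
    have hkey : ‖e‖ = ⟪e, (ω₀ : Vh)⟫ := by
      rw [hω₀]
      simp only [real_inner_smul_right, real_inner_self_eq_norm_mul_norm]
      field_simp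
    have hsplit : ⟪e, (ω₀ : Vh)⟫
        = ⟪(u : V) - L a, L (ω₀ : Vh)⟫ + (⟪L a, L (ω₀ : Vh)⟫ - ⟪a, (ω₀ : Vh)⟫) := by
      rw [he, inner_sub_left, hLstar, inner_sub_left]
      ring
    have h1 : ⟪(u : V) - L a, L (ω₀ : Vh)⟫ ≤ CV * ‖(u : V) - L a‖ := by
      calc ⟪(u : V) - L a, L (ω₀ : Vh)⟫ ≤ ‖(u : V) - L a‖ * ‖L (ω₀ : Vh)‖ :=
            real_inner_le_norm _ _
        _ ≤ ‖(u : V) - L a‖ * (CV * ‖(ω₀ : Vh)‖) := by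
            exact mul_le_mul_of_nonneg_left (hL _) (norm_nonneg _)
        _ = CV * ‖(u : V) - L a‖ := by
            rw [mem_sphere_zero_iff_norm.mp ω₀.2]; ring
    have h2 : ⟪L a, L (ω₀ : Vh)⟫ - ⟪a, (ω₀ : Vh)⟫ ≤
        ⨆ ω : Metric.sphere (0 : Vh) 1, f ω := by
      calc ⟪L a, L (ω₀ : Vh)⟫ - ⟪a, (ω₀ : Vh)⟫ ≤ f (ω₀ : Vh) := le_abs_self _
        _ ≤ _ := le_ciSup hbdd ω₀
    calc ‖Lstar (u : V) - Ih u‖ = ‖e‖ := by rw [← ha, ← he]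
      _ = ⟪(u : V) - L a, L (ω₀ : Vh)⟫ + (⟪L a, L (ω₀ : Vh)⟫ - ⟪a, (ω₀ : Vh)⟫) := by
          rw [hkey, hsplit]
      _ ≤ CV * ‖(u : V) - L a‖ + ⨆ ω : Metric.sphere (0 : Vh) 1, f ω :=
          add_le_add h1 h2
end
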